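/- Let A be a bialgebra over a field k and let M, N be left-right Yetter-Drinfel'd modules over A. For natural numbers n, p ≥ 0, define Y^{n,p}(M,N) = Hom_k(A^{⊗n} ⊗ M, N ⊗ A^{⊗p}), and define the horizontal face maps b_i^{n,p}: Y^{n,p} → Y^{n+1,p} for 0 ≤ i ≤ n+1 by: b_0(f)(a^1⊗...⊗a^{n+1}⊗m) = Σ (a^1)_1·f(a^2⊗...⊗a^{n+1}⊗m)^0 ⊗ (a^1)_2 f(...)^1 ⊗ ... ⊗ (a^1)_{p+1} f(...)^p (diagonal left action on N⊗A^p), b_i(f) multiplies a^i a^{i+1} for 1 ≤ i ≤ n, and b_{n+1}(f)(a^1⊗...⊗a^{n+1}⊗m) = Σ f(a^1⊗...⊗a^n⊗(a^{n+1})_{p+1}·m)^0 ⊗ f(...)^1 (a^{n+1})_1 ⊗ ... ⊗ f(...)^p (a^{n+1})_p. Then for all 0 ≤ i < j ≤ n+2, one has b_j^{n+1,p} ∘ b_i^{n,p} = b_i^{n+1,p} ∘ b_{j-1}^{n,p}. -/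

import Mathlib

open TensorProduct
noncomputable section

namespace PS

variable (k : Type) [Field k] (A : Type) [Ring A] [Bialgebra k A]

/-- Left-nested tensor powers with base `B`: `pwr B n = B ⊗ A ⊗ ⋯ ⊗ A` (`n` copies of `A`). -/
def pwr (B : ModuleCat k) : ℕ → ModuleCat k
  | 0 => B
  | n + 1 => ModuleCat.of k (pwr B n ⊗[k] A)

/-- `A^{⊗ n}` realized as `pwr k n`, i.e. `k ⊗ A ⊗ ⋯ ⊗ A`. -/
abbrev Pk (n : ℕ) : ModuleCat k := pwr k A (ModuleCat.of k k) n

abbrev μA : A ⊗[k] A →ₗ[k] A := LinearMap.mul' k A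
abbrev ΔA : A →ₗ[k] A ⊗[k] A := Coalgebra.comul
abbrev εA : A →ₗ[k] k := Coalgebra.counit

/-- Multiplication of the tensorands in slots `i` and `i+1` (`1 ≤ i ≤ n`);
junk (zero map) for other `i`. -/
def mulP : (n : ℕ) → (i : ℕ) → ((Pk k A (n+1) : Type) →ₗ[k] Pk k A n)
  | 0, _ => 0
  | n + 1, i =>
      if i = n + 1 then
        (TensorProduct.map (LinearMap.id : (Pk k A n : Type) →ₗ[k] Pk k A n) (μA k A)).comp
          (TensorProduct.assoc k (Pk k A n) A A).toLinearMap
      else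
        TensorProduct.map (mulP n i) (LinearMap.id : A →ₗ[k] A)

/-- Insert an `A`-factor at the innermost slot (slot 1). -/
def insP : (n : ℕ) → (A ⊗[k] (Pk k A n : Type)) ≃ₗ[k] (Pk k A (n+1) : Type)
  | 0 => TensorProduct.comm k A k
  | n + 1 =>
      (TensorProduct.assoc k A (Pk k A n) A).symm.trans
        (TensorProduct.congr (insP n) (LinearEquiv.refl k A))

section NM

variable {N : Type} [AddCommGroup N] [Module k N]

/-- The left diagonal action of `A` on `N ⊗ A^{⊗ p}` built from a base action `ωN`. -/
def ldiag (ωN : A ⊗[k] N →ₗ[k] N) :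
    (p : ℕ) → (A ⊗[k] (pwr k A (ModuleCat.of k N) p : Type) →ₗ[k] pwr k A (ModuleCat.of k N) p)
  | 0 => ωN
  | p + 1 =>
      (TensorProduct.map (ldiag ωN p) (μA k A)).comp <|
        ((TensorProduct.tensorTensorTensorComm k A A
            (pwr k A (ModuleCat.of k N) p : Type) A).toLinearMap).comp
          (TensorProduct.map (ΔA k A) (LinearMap.id :
            ((pwr k A (ModuleCat.of k N) p : Type) ⊗[k] A) →ₗ[k] _))

/-- Right diagonal multiplication on the `A`-slots of `N ⊗ A^{⊗ p}` (counit on the base). -/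
def rdiagE : (p : ℕ) →
    ((pwr k A (ModuleCat.of k N) p : Type) ⊗[k] A →ₗ[k] pwr k A (ModuleCat.of k N) p)
  | 0 => (TensorProduct.rid k N).toLinearMap.comp
      (TensorProduct.map (LinearMap.id : N →ₗ[k] N) (εA k A))
  | p + 1 =>
      (TensorProduct.map (rdiagE p) (μA k A)).comp <|
        ((TensorProduct.tensorTensorTensorComm k
            (pwr k A (ModuleCat.of k N) p : Type) A A A).toLinearMap).comp
          (TensorProduct.map
            (LinearMap.id : ((pwr k A (ModuleCat.of k N) p : Type) ⊗[k] A) →ₗ[k] _) (ΔA k A))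

/-- Right diagonal action on `N ⊗ A^{⊗ p}` built from a base (right) action `ωNr`. -/
def rdiagAct (ωNr : N ⊗[k] A →ₗ[k] N) : (p : ℕ) →
    ((pwr k A (ModuleCat.of k N) p : Type) ⊗[k] A →ₗ[k] pwr k A (ModuleCat.of k N) p)
  | 0 => ωNr
  | p + 1 =>
      (TensorProduct.map (rdiagAct ωNr p) (μA k A)).comp <|
        ((TensorProduct.tensorTensorTensorComm k
            (pwr k A (ModuleCat.of k N) p : Type) A A A).toLinearMap).comp
          (TensorProduct.map
            (LinearMap.id : ((pwr k A (ModuleCat.of k N) p : Type) ⊗[k] A) →ₗ[k] _) (ΔA k A))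

end NM

/-- `dL : A^{⊗ n} → A ⊗ A^{⊗ n}`, `a^1 ⊗ ⋯ ⊗ a^n ↦ Σ (a^1)_1 ⋯ (a^n)_1 ⊗ ((a^1)_2 ⊗ ⋯ ⊗ (a^n)_2)`. -/
def dL : (n : ℕ) → ((Pk k A n : Type) →ₗ[k] A ⊗[k] (Pk k A n : Type))
  | 0 => (TensorProduct.map (Algebra.linearMap k A) (LinearMap.id : k →ₗ[k] k)).comp
      (TensorProduct.lid k k).symm.toLinearMap
  | n + 1 =>
      (TensorProduct.map (μA k A)
          (LinearMap.id : ((Pk k A n : Type) ⊗[k] A) →ₗ[k] _)).comp <|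
        ((TensorProduct.tensorTensorTensorComm k A (Pk k A n : Type) A A).toLinearMap).comp
          (TensorProduct.map (dL n) (ΔA k A))

/-- `dR : A^{⊗ n} → A^{⊗ n} ⊗ A`, `a^1 ⊗ ⋯ ⊗ a^n ↦ Σ ((a^1)_1 ⊗ ⋯ ⊗ (a^n)_1) ⊗ (a^1)_2 ⋯ (a^n)_2`. -/
def dR : (n : ℕ) → ((Pk k A n : Type) →ₗ[k] (Pk k A n : Type) ⊗[k] A)
  | 0 => (TensorProduct.map (LinearMap.id : k →ₗ[k] k) (Algebra.linearMap k A)).comp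
      (TensorProduct.rid k k).symm.toLinearMap
  | n + 1 =>
      (TensorProduct.map
          (LinearMap.id : ((Pk k A n : Type) ⊗[k] A) →ₗ[k] _) (μA k A)).comp <|
        ((TensorProduct.tensorTensorTensorComm k (Pk k A n : Type) A A A).toLinearMap).comp
          (TensorProduct.map (dR n) (ΔA k A))

section Base

variable {N : Type} [AddCommGroup N] [Module k N]

/-- Apply `ρN : N → N ⊗ A` to the base of `N ⊗ A^{⊗ p}`. -/
def rhoBase (ρN : N →ₗ[k] N ⊗[k] A) : (p : ℕ) →
    ((pwr k A (ModuleCat.of k N) p : Type) →ₗ[k] pwr k A (ModuleCat.of k (N ⊗[k] A)) p)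
  | 0 => ρN
  | p + 1 => TensorProduct.map (rhoBase ρN p) (LinearMap.id : A →ₗ[k] A)

/-- Reinterpret `(N ⊗ A) ⊗ A^{⊗ p}` as `N ⊗ A^{⊗ (p+1)}`. -/
def shiftB : (p : ℕ) →
    ((pwr k A (ModuleCat.of k (N ⊗[k] A)) p : Type) ≃ₗ[k] pwr k A (ModuleCat.of k N) (p+1))
  | 0 => LinearEquiv.refl k (N ⊗[k] A)
  | p + 1 => TensorProduct.congr (shiftB p) (LinearEquiv.refl k A)

/-- Multiply the `A`-component of the base `N ⊗ A` on the right by an element of `A`. -/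
def rmulBase : (p : ℕ) →
    ((pwr k A (ModuleCat.of k (N ⊗[k] A)) p : Type) ⊗[k] A →ₗ[k]
      pwr k A (ModuleCat.of k (N ⊗[k] A)) p)
  | 0 => (TensorProduct.map (LinearMap.id : N →ₗ[k] N) (μA k A)).comp
      (TensorProduct.assoc k N A A).toLinearMap
  | p + 1 =>
      (TensorProduct.map (rmulBase p) (LinearMap.id : A →ₗ[k] A)).comp <|
        ((TensorProduct.assoc k (pwr k A (ModuleCat.of k (N ⊗[k] A)) p : Type) A A).symm.toLinearMap).comp <|
          (TensorProduct.map
            (LinearMap.id : (pwr k A (ModuleCat.of k (N ⊗[k] A)) p : Type) →ₗ[k] _)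
            (TensorProduct.comm k A A).toLinearMap).comp
            (TensorProduct.assoc k
              (pwr k A (ModuleCat.of k (N ⊗[k] A)) p : Type) A A).toLinearMap

/-- Apply the counit to the `A`-component of the base `N ⊗ A`. -/
def epsBase : (p : ℕ) →
    ((pwr k A (ModuleCat.of k (N ⊗[k] A)) p : Type) →ₗ[k] pwr k A (ModuleCat.of k N) p)
  | 0 => (TensorProduct.rid k N).toLinearMap.comp
      (TensorProduct.map (LinearMap.id : N →ₗ[k] N) (εA k A))
  | p + 1 => TensorProduct.map (epsBase p) (LinearMap.id : A →ₗ[k] A)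

/-- Apply `Δ` on the `i`-th `A`-slot (`1 ≤ i ≤ p`) of `N ⊗ A^{⊗ p}`; junk otherwise. -/
def comulAt : (p : ℕ) → (i : ℕ) →
    ((pwr k A (ModuleCat.of k N) p : Type) →ₗ[k] pwr k A (ModuleCat.of k N) (p+1))
  | 0, _ => 0
  | p + 1, i =>
      if i = p + 1 then
        ((TensorProduct.assoc k (pwr k A (ModuleCat.of k N) p : Type) A A).symm.toLinearMap).comp
          (TensorProduct.map
            (LinearMap.id : (pwr k A (ModuleCat.of k N) p : Type) →ₗ[k] _) (ΔA k A))
      else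
        TensorProduct.map (comulAt p i) (LinearMap.id : A →ₗ[k] A)

/-- Left coaction on `N ⊗ A^{⊗ p}` coming from a left coaction on the base. -/
def lcoBase (ρNl : N →ₗ[k] A ⊗[k] N) : (p : ℕ) →
    ((pwr k A (ModuleCat.of k N) p : Type) →ₗ[k]
      A ⊗[k] (pwr k A (ModuleCat.of k N) p : Type))
  | 0 => ρNl
  | p + 1 =>
      ((TensorProduct.assoc k A (pwr k A (ModuleCat.of k N) p : Type) A).toLinearMap).comp
        (TensorProduct.map (lcoBase ρNl p) (LinearMap.id : A →ₗ[k] A))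

end Base

section Bicomplex

variable {M N : Type} [AddCommGroup M] [Module k M] [AddCommGroup N] [Module k N]

/-- `A^{⊗ n} ⊗ M`, the domain of the `(n,p)` cochains. -/
abbrev Dm (M : Type) [AddCommGroup M] [Module k M] (n : ℕ) : Type :=
  (Pk k A n : Type) ⊗[k] M

/-- `N ⊗ A^{⊗ p}`. -/
abbrev Cd (N : Type) [AddCommGroup N] [Module k N] (p : ℕ) : Type :=
  (pwr k A (ModuleCat.of k N) p : Type)

/-- The space of `(n,p)` cochains `Hom(A^{⊗ n} ⊗ M, N ⊗ A^{⊗ p})`. -/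
abbrev Yc (M N : Type) [AddCommGroup M] [Module k M] [AddCommGroup N] [Module k N]
    (n p : ℕ) : Type := Dm k A M n →ₗ[k] Cd k A N p

variable (ωM : A ⊗[k] M →ₗ[k] M) (ρM : M →ₗ[k] M ⊗[k] A)
variable (ωN : A ⊗[k] N →ₗ[k] N) (ρN : N →ₗ[k] N ⊗[k] A)

/-- `b_0`: the face using the diagonal left action of `a^1` on `N ⊗ A^{⊗ p}`. -/
def face0 (n p : ℕ) (f : Yc k A M N n p) : Yc k A M N (n+1) p :=
  (ldiag k A ωN p).comp <|
    (TensorProduct.map (LinearMap.id : A →ₗ[k] A) f).comp <|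
      ((TensorProduct.assoc k A (Pk k A n : Type) M).toLinearMap).comp
        (TensorProduct.map (insP k A n).symm.toLinearMap (LinearMap.id : M →ₗ[k] M))

/-- `b_i`, `1 ≤ i ≤ n`: multiply the adjacent arguments `a^i a^{i+1}`. -/
def faceMid (n p : ℕ) (i : ℕ) (f : Yc k A M N n p) : Yc k A M N (n+1) p :=
  f.comp (TensorProduct.map (mulP k A n i) (LinearMap.id : M →ₗ[k] M))

/-- `b_{n+1}` in the Hopf-module case: `f(a^1 ⊗ ⋯ ⊗ a^n ⊗ a^{n+1}·m)`. -/
def faceLastH (n p : ℕ) (f : Yc k A M N n p) : Yc k A M N (n+1) p :=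
  f.comp <|
    (TensorProduct.map (LinearMap.id : (Pk k A n : Type) →ₗ[k] _) ωM).comp
      (TensorProduct.assoc k (Pk k A n : Type) A M).toLinearMap

/-- `b_{n+1}` in the Yetter-Drinfel'd case. -/
def faceLastYD (n p : ℕ) (f : Yc k A M N n p) : Yc k A M N (n+1) p :=
  (rdiagE k A p).comp <|
    ((TensorProduct.comm k A (Cd k A N p)).toLinearMap).comp <|
      (TensorProduct.map (LinearMap.id : A →ₗ[k] A)
        (f.comp (TensorProduct.map (LinearMap.id : (Pk k A n : Type) →ₗ[k] _) ωM))).comp <|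
        ((TensorProduct.leftComm k (Pk k A n : Type) A (A ⊗[k] M)).toLinearMap).comp <|
          (TensorProduct.map (LinearMap.id : (Pk k A n : Type) →ₗ[k] _)
            (TensorProduct.assoc k A A M).toLinearMap).comp <|
            ((TensorProduct.assoc k (Pk k A n : Type) (A ⊗[k] A) M).toLinearMap).comp
              (TensorProduct.map
                (TensorProduct.map (LinearMap.id : (Pk k A n : Type) →ₗ[k] _) (ΔA k A))
                (LinearMap.id : M →ₗ[k] M))

/-- The Yetter-Drinfel'd horizontal faces `b_i^{n,p}`, `0 ≤ i ≤ n+1`. -/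
def bYD (n p : ℕ) (i : ℕ) (f : Yc k A M N n p) : Yc k A M N (n+1) p :=
  if i = 0 then face0 k A ωN n p f
  else if i ≤ n then faceMid k A n p i f
  else faceLastYD k A ωM n p f

/-- The Hopf-module horizontal faces `b_i^{n,p}`, `0 ≤ i ≤ n+1`. -/
def bH (n p : ℕ) (i : ℕ) (f : Yc k A M N n p) : Yc k A M N (n+1) p :=
  if i = 0 then face0 k A ωN n p f
  else if i ≤ n then faceMid k A n p i f
  else faceLastH k A ωM n p f

/-- `c_0` in the Hopf-module case: apply `ρ_N` to the `N`-component of the output. -/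
def cof0H (n p : ℕ) (f : Yc k A M N n p) : Yc k A M N n (p+1) :=
  ((shiftB k A p).toLinearMap).comp ((rhoBase k A ρN p).comp f)

/-- `c_0` in the Yetter-Drinfel'd case. -/
def cof0YD (n p : ℕ) (f : Yc k A M N n p) : Yc k A M N n (p+1) :=
  ((shiftB k A p).toLinearMap).comp <|
    (rmulBase k A p).comp <|
      ((TensorProduct.comm k A
          (pwr k A (ModuleCat.of k (N ⊗[k] A)) p : Type)).toLinearMap).comp <|
        (TensorProduct.map (LinearMap.id : A →ₗ[k] A) ((rhoBase k A ρN p).comp f)).comp <|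
          ((TensorProduct.assoc k A (Pk k A n : Type) M).toLinearMap).comp
            (TensorProduct.map (dL k A n) (LinearMap.id : M →ₗ[k] M))

/-- `c_{p+1}`: uses the right comodule structure of `M`. -/
def cofLast (n p : ℕ) (f : Yc k A M N n p) : Yc k A M N n (p+1) :=
  (TensorProduct.map f (μA k A)).comp <|
    ((TensorProduct.tensorTensorTensorComm k (Pk k A n : Type) A M A).toLinearMap).comp
      (TensorProduct.map (dR k A n) ρM)

/-- The Yetter-Drinfel'd vertical cofaces `c_j^{n,p}`, `0 ≤ j ≤ p+1`. -/
def cYD (n p : ℕ) (j : ℕ) (f : Yc k A M N n p) : Yc k A M N n (p+1) :=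
  if j = 0 then cof0YD k A ρN n p f
  else if j ≤ p then (comulAt k A p j).comp f
  else cofLast k A ρM n p f

/-- The Hopf-module vertical cofaces `c_j^{n,p}`, `0 ≤ j ≤ p+1`. -/
def cH (n p : ℕ) (j : ℕ) (f : Yc k A M N n p) : Yc k A M N n (p+1) :=
  if j = 0 then cof0H k A ρN n p f
  else if j ≤ p then (comulAt k A p j).comp f
  else cofLast k A ρM n p f

/-- The horizontal differential (Yetter-Drinfel'd case). -/
def dmYD (n p : ℕ) (f : Yc k A M N n p) : Yc k A M N (n+1) p :=
  ∑ i ∈ Finset.range (n+2), ((-1 : ℤ)^i) • bYD k A ωM ωN n p i f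

/-- The vertical differential (Yetter-Drinfel'd case). -/
def dcYD (n p : ℕ) (f : Yc k A M N n p) : Yc k A M N n (p+1) :=
  ∑ j ∈ Finset.range (p+2), ((-1 : ℤ)^j) • cYD k A ρM ρN n p j f

/-- The horizontal differential (Hopf-module case). -/
def dmH (n p : ℕ) (f : Yc k A M N n p) : Yc k A M N (n+1) p :=
  ∑ i ∈ Finset.range (n+2), ((-1 : ℤ)^i) • bH k A ωM ωN n p i f

/-- The vertical differential (Hopf-module case). -/
def dcH (n p : ℕ) (f : Yc k A M N n p) : Yc k A M N n (p+1) :=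
  ∑ j ∈ Finset.range (p+2), ((-1 : ℤ)^j) • cH k A ρM ρN n p j f

end Bicomplex

section Structures

variable {M : Type} [AddCommGroup M] [Module k M]

/-- `(M, ωM)` is a left `A`-module. -/
def IsModule (ωM : A ⊗[k] M →ₗ[k] M) : Prop :=
  (∀ m : M, ωM ((1 : A) ⊗ₜ m) = m) ∧
  ∀ (a b : A) (m : M), ωM (a ⊗ₜ ωM (b ⊗ₜ m)) = ωM ((a * b) ⊗ₜ m)

/-- `(M, ρM)` is a right `A`-comodule. -/
def IsComodule (ρM : M →ₗ[k] M ⊗[k] A) : Prop :=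
  ((TensorProduct.rid k M).toLinearMap.comp
      ((TensorProduct.map (LinearMap.id : M →ₗ[k] M) (εA k A)).comp ρM) = LinearMap.id) ∧
  (TensorProduct.map ρM (LinearMap.id : A →ₗ[k] A)).comp ρM =
    ((TensorProduct.assoc k M A A).symm.toLinearMap).comp
      ((TensorProduct.map (LinearMap.id : M →ₗ[k] M) (ΔA k A)).comp ρM)

/-- The map `a ⊗ m ↦ Σ a_1·m_0 ⊗ a_2 m_1`. -/
def hopfRHS (ωM : A ⊗[k] M →ₗ[k] M) (ρM : M →ₗ[k] M ⊗[k] A) :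
    A ⊗[k] M →ₗ[k] M ⊗[k] A :=
  (TensorProduct.map ωM (μA k A)).comp <|
    ((TensorProduct.tensorTensorTensorComm k A A M A).toLinearMap).comp
      (TensorProduct.map (ΔA k A) ρM)

/-- The map `a ⊗ m ↦ Σ (a_2·m)_0 ⊗ (a_2·m)_1 a_1`. -/
def ydLHS (ωM : A ⊗[k] M →ₗ[k] M) (ρM : M →ₗ[k] M ⊗[k] A) :
    A ⊗[k] M →ₗ[k] M ⊗[k] A :=
  (TensorProduct.map (LinearMap.id : M →ₗ[k] M) (μA k A)).comp <|
    ((TensorProduct.assoc k M A A).toLinearMap).comp <|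
      ((TensorProduct.comm k A (M ⊗[k] A)).toLinearMap).comp <|
        (TensorProduct.map (LinearMap.id : A →ₗ[k] A) (ρM.comp ωM)).comp <|
          ((TensorProduct.assoc k A A M).toLinearMap).comp
            (TensorProduct.map (ΔA k A) (LinearMap.id : M →ₗ[k] M))

/-- `(M, ωM, ρM)` is a left-right Yetter-Drinfel'd module over `A`. -/
def IsYetterDrinfeld (ωM : A ⊗[k] M →ₗ[k] M) (ρM : M →ₗ[k] M ⊗[k] A) : Prop :=
  IsModule k A ωM ∧ IsComodule k A ρM ∧
    ydLHS k A ωM ρM = hopfRHS k A ωM ρM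

/-- `(M, ωM, ρM)` is a left-right Hopf module over `A`. -/
def IsHopfModule (ωM : A ⊗[k] M →ₗ[k] M) (ρM : M →ₗ[k] M ⊗[k] A) : Prop :=
  IsModule k A ωM ∧ IsComodule k A ρM ∧
    ρM.comp ωM = hopfRHS k A ωM ρM

end Structures
attribute [reducible] pwr
section Aux
set_option linter.unnecessarySimpa false
variable (k : Type) [Field k] (A : Type) [Ring A] [Bialgebra k A]
variable {M N : Type} [AddCommGroup M] [Module k M] [AddCommGroup N] [Module k N]

lemma comul_mul' (a b : A) : ΔA k A (a*b) = ΔA k A a * ΔA k A b := by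
  simpa using map_mul (Bialgebra.comulAlgHom k A) a b

lemma counit_mul' (a b : A) : εA k A (a*b) = εA k A a * εA k A b := by
  simpa using map_mul (Bialgebra.counitAlgHom k A) a b

lemma insP_succ_apply (n : ℕ) (a : A) (x : (Pk k A n : Type)) (c : A) :
    insP k A (n+1) (a ⊗ₜ (x ⊗ₜ c)) = (insP k A n (a ⊗ₜ x)) ⊗ₜ c := by
  rw [insP]; rfl

lemma mulP_last_apply (n : ℕ) (x : (Pk k A n : Type)) (c d : A) :
    mulP k A (n+1) (n+1) ((x ⊗ₜ c) ⊗ₜ d) = x ⊗ₜ (c*d) := by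
  rw [mulP, if_pos rfl]; rfl

lemma mulP_lt_apply (n i : ℕ) (h : i ≠ n+1) (x : (Pk k A (n+1) : Type)) (c : A) :
    mulP k A (n+1) i (x ⊗ₜ c) = (mulP k A n i x) ⊗ₜ c := by
  rw [mulP, if_neg h]; rfl

/-- ldiag at level 0 -/
lemma ldiag_zero_apply (ωN : A ⊗[k] N →ₗ[k] N) (a : A) (y : N) :
    ldiag k A ωN 0 (a ⊗ₜ y) = ωN (a ⊗ₜ y) := rfl

/-- one step of ldiag -/
def ldStep (ωN : A ⊗[k] N →ₗ[k] N) (p : ℕ) :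
    (A ⊗[k] A) ⊗[k] ((Cd k A N p : Type) ⊗[k] A) →ₗ[k] (Cd k A N (p+1) : Type) :=
  (TensorProduct.map (ldiag k A ωN p) (μA k A)).comp
    (TensorProduct.tensorTensorTensorComm k A A (Cd k A N p : Type) A).toLinearMap

lemma ldStep_tmul (ωN : A ⊗[k] N →ₗ[k] N) (p : ℕ) (u1 u2 : A) (z : (Cd k A N p : Type)) (c : A) :
    ldStep k A ωN p ((u1 ⊗ₜ u2) ⊗ₜ (z ⊗ₜ c)) = (ldiag k A ωN p (u1 ⊗ₜ z)) ⊗ₜ (u2 * c) := rfl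

lemma ldiag_succ_apply (ωN : A ⊗[k] N →ₗ[k] N) (p : ℕ) (a : A) (W : (Cd k A N p : Type) ⊗[k] A) :
    ldiag k A ωN (p+1) (a ⊗ₜ W) = ldStep k A ωN p ((ΔA k A a) ⊗ₜ W) := rfl

lemma rdiagE_zero_apply (y : N) (c : A) :
    rdiagE k A (N := N) 0 (y ⊗ₜ c) = εA k A c • y := by
  rw [rdiagE]
  show (TensorProduct.rid k N) (y ⊗ₜ εA k A c) = εA k A c • y
  rw [TensorProduct.rid_tmul]

/-- one step of rdiagE -/
def rdStep (p : ℕ) :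
    ((Cd k A N p : Type) ⊗[k] A) ⊗[k] (A ⊗[k] A) →ₗ[k] (Cd k A N (p+1) : Type) :=
  (TensorProduct.map (rdiagE k A p) (μA k A)).comp
    (TensorProduct.tensorTensorTensorComm k (Cd k A N p : Type) A A A).toLinearMap

lemma rdStep_tmul (p : ℕ) (z : (Cd k A N p : Type)) (e c1 c2 : A) :
    rdStep k A (N := N) p ((z ⊗ₜ e) ⊗ₜ (c1 ⊗ₜ c2)) = (rdiagE k A p (z ⊗ₜ c1)) ⊗ₜ (e * c2) := rfl

lemma rdiagE_succ_apply (p : ℕ) (W : (Cd k A N p : Type) ⊗[k] A) (c : A) :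
    rdiagE k A (N := N) (p+1) (W ⊗ₜ c) = rdStep k A p (W ⊗ₜ (ΔA k A c)) := rfl

end Aux
section Aux2
variable (k : Type) [Field k] (A : Type) [Ring A] [Bialgebra k A]
variable {M N : Type} [AddCommGroup M] [Module k M] [AddCommGroup N] [Module k N]

/-- The map `c1 ⊗ c2 ↦ rdiagE (f (x ⊗ ωM(c2 ⊗ m)) ⊗ c1)`. -/
def lastAux (ωM : A ⊗[k] M →ₗ[k] M) (n p : ℕ) (f : Yc k A M N n p)
    (x : (Pk k A n : Type)) (m : M) : A ⊗[k] A →ₗ[k] (Cd k A N p : Type) :=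
  (rdiagE k A p).comp <|
    ((TensorProduct.comm k A (Cd k A N p : Type)).toLinearMap).comp <|
      TensorProduct.map (LinearMap.id : A →ₗ[k] A)
        (f ∘ₗ (TensorProduct.mk k (Pk k A n : Type) M x) ∘ₗ ωM ∘ₗ ((TensorProduct.mk k A M).flip m))

lemma lastAux_tmul (ωM : A ⊗[k] M →ₗ[k] M) (n p : ℕ) (f : Yc k A M N n p)
    (x : (Pk k A n : Type)) (m : M) (c1 c2 : A) :
    lastAux k A ωM n p f x m (c1 ⊗ₜ c2) = rdiagE k A p (f (x ⊗ₜ ωM (c2 ⊗ₜ m)) ⊗ₜ c1) := rfl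

lemma face0_apply (ωN : A ⊗[k] N →ₗ[k] N) (n p : ℕ) (f : Yc k A M N n p)
    (a : A) (x : (Pk k A n : Type)) (m : M) :
    face0 k A ωN n p f ((insP k A n (a ⊗ₜ x)) ⊗ₜ m) = ldiag k A ωN p (a ⊗ₜ f (x ⊗ₜ m)) := by
  rw [face0]
  show ldiag k A ωN p ((TensorProduct.map LinearMap.id f)
      ((TensorProduct.assoc k A (Pk k A n : Type) M)
        (((insP k A n).symm (insP k A n (a ⊗ₜ x))) ⊗ₜ m))) = _
  rw [LinearEquiv.symm_apply_apply]
  rfl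

lemma faceMid_apply (n p i : ℕ) (f : Yc k A M N n p) (X : (Pk k A (n+1) : Type)) (m : M) :
    faceMid k A n p i f (X ⊗ₜ m) = f ((mulP k A n i X) ⊗ₜ m) := rfl

lemma faceLastYD_apply (ωM : A ⊗[k] M →ₗ[k] M) (n p : ℕ) (f : Yc k A M N n p)
    (x : (Pk k A n : Type)) (c : A) (m : M) :
    faceLastYD k A ωM n p f ((x ⊗ₜ c) ⊗ₜ m) = lastAux k A ωM n p f x m (ΔA k A c) := by
  rw [faceLastYD]
  show (rdiagE k A p) ((TensorProduct.comm k A (Cd k A N p : Type))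
      ((TensorProduct.map LinearMap.id (f ∘ₗ TensorProduct.map LinearMap.id ωM))
        ((TensorProduct.leftComm k (Pk k A n : Type) A (A ⊗[k] M))
          ((TensorProduct.map LinearMap.id (TensorProduct.assoc k A A M).toLinearMap)
            ((TensorProduct.assoc k (Pk k A n : Type) (A ⊗[k] A) M)
              ((x ⊗ₜ (ΔA k A c)) ⊗ₜ m)))))) = _
  generalize (ΔA k A c) = u
  induction u using TensorProduct.induction_on with
  | zero => simp [TensorProduct.tmul_zero, TensorProduct.zero_tmul]
  | add u v hu hv =>
      rw [TensorProduct.tmul_add, TensorProduct.add_tmul, map_add, map_add, map_add, map_add,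
        map_add, map_add, hu, hv]
      exact (map_add _ _ _).symm
  | tmul c1 c2 =>
      rw [lastAux_tmul]
      rfl
end Aux2
section Aux3
variable (k : Type) [Field k] (A : Type) [Ring A] [Bialgebra k A]

/-- S1 -/
lemma mulP_one_insP : ∀ (n : ℕ) (a b : A) (x : (Pk k A n : Type)),
    mulP k A (n+1) 1 (insP k A (n+1) (a ⊗ₜ (insP k A n (b ⊗ₜ x)))) = insP k A n ((a*b) ⊗ₜ x) := by
  intro n
  induction n with
  | zero =>
      intro a b x
      show mulP k A 1 1 (insP k A 1 (a ⊗ₜ (insP k A 0 (b ⊗ₜ x)))) = insP k A 0 ((a*b) ⊗ₜ x)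
      rw [insP, insP, insP, mulP, if_pos rfl]
      rfl
  | succ n ih =>
      intro a b x
      induction x using TensorProduct.induction_on with
      | zero => simp
      | add u v hu hv => simp only [TensorProduct.tmul_add, map_add, hu, hv]
      | tmul y c =>
          rw [insP_succ_apply, insP_succ_apply, insP_succ_apply,
            mulP_lt_apply k A (n+1) 1 (by omega), ih]
end Aux3

section Aux4
variable (k : Type) [Field k] (A : Type) [Ring A] [Bialgebra k A]

/-- S2 -/
lemma mulP_insP_succ : ∀ (n i : ℕ), 1 ≤ i → i ≤ n → ∀ (a : A) (x : (Pk k A (n+1) : Type)),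
    mulP k A (n+1) (i+1) (insP k A (n+1) (a ⊗ₜ x)) = insP k A n (a ⊗ₜ mulP k A n i x) := by
  intro n
  induction n with
  | zero => intro i h1 h2; omega
  | succ n ih =>
      intro i h1 h2 a x
      induction x using TensorProduct.induction_on with
      | zero => simp
      | add u v hu hv => simp only [TensorProduct.tmul_add, map_add, hu, hv]
      | tmul y c =>
          rcases Nat.lt_or_ge i (n+1) with hlt | hge
          · -- i ≤ n
            rw [insP_succ_apply, mulP_lt_apply k A (n+1) (i+1) (by omega),
              mulP_lt_apply k A n i (by omega), ih i h1 (by omega), insP_succ_apply]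
          · -- i = n+1
            have hi : i = n + 1 := by omega
            subst hi
            induction y using TensorProduct.induction_on with
            | zero => simp
            | add u v hu hv => simp only [TensorProduct.tmul_add, TensorProduct.add_tmul,
                map_add, hu, hv]
            | tmul z d =>
                rw [insP_succ_apply, insP_succ_apply, mulP_last_apply, mulP_last_apply,
                  insP_succ_apply]

/-- S4 -/
lemma mulP_mulP : ∀ (m i j : ℕ), 1 ≤ i → i < j → j ≤ m+2 → ∀ (X : (Pk k A (m+3) : Type)),
    mulP k A (m+1) i (mulP k A (m+2) j X) = mulP k A (m+1) (j-1) (mulP k A (m+2) i X) := by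
  intro m
  induction m with
  | zero =>
      intro i j h1 h2 h3 X
      have hj : j = 2 := by omega
      have hi : i = 1 := by omega
      subst hj; subst hi
      induction X using TensorProduct.induction_on with
      | zero => simp
      | add u v hu hv => simp only [map_add, hu, hv]
      | tmul V d =>
          induction V using TensorProduct.induction_on with
          | zero => simp
          | add u v hu hv => simp only [TensorProduct.add_tmul, map_add, hu, hv]
          | tmul W c =>
              induction W using TensorProduct.induction_on with
              | zero => simp
              | add u v hu hv => simp only [TensorProduct.add_tmul, map_add, hu, hv]
              | tmul U e =>
                  rw [mulP_last_apply k A 1, mulP_last_apply k A 0,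
                    mulP_lt_apply k A 1 1 (by omega), mulP_last_apply k A 0,
                    mulP_last_apply k A 0, mul_assoc]
  | succ m ih =>
      intro i j h1 h2 h3 X
      induction X using TensorProduct.induction_on with
      | zero => simp
      | add u v hu hv => simp only [map_add, hu, hv]
      | tmul V d =>
          induction V using TensorProduct.induction_on with
          | zero => simp
          | add u v hu hv => simp only [TensorProduct.add_tmul, map_add, hu, hv]
          | tmul W c =>
              rcases Nat.lt_or_ge j (m+3) with hjlt | hjge
              · -- j ≤ m+2, so i ≤ m+1
                have hij : i ≠ m + 2 := by omega
                have hj' : j ≠ m + 3 := by omega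
                have hi' : i ≠ m + 2 := by omega
                have hij2 : i ≠ m + 1 + 1 := by omega
                have hjm : j - 1 ≠ m + 2 := by omega
                have him : i ≠ m + 1 → True := fun _ => trivial
                rw [mulP_lt_apply k A (m+2) j hj', mulP_lt_apply k A (m+2) i (by omega)]
                rcases Nat.lt_or_ge i (m+2) with hilt | hige
                · rcases Nat.lt_or_ge (j-1) (m+2) with hj1lt | hj1ge
                  · -- both inner
                    rw [mulP_lt_apply k A (m+1) i (by omega),
                      mulP_lt_apply k A (m+1) (j-1) (by omega)]
                    rw [ih i j h1 h2 (by omega)]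
                  · -- j - 1 = m+2, i.e. j = m+3, contradiction
                    omega
                · omega
              · -- j = m+3
                have hj : j = m + 3 := by omega
                subst hj
                rw [mulP_last_apply, show m + 3 - 1 = m + 2 from rfl]
                rcases Nat.lt_or_ge i (m+2) with hilt | hige
                · -- i ≤ m+1
                  rw [mulP_lt_apply k A (m+1) i (by omega),
                    mulP_lt_apply k A (m+2) i (by omega),
                    mulP_lt_apply k A (m+1) i (by omega)]
                  show (mulP k A (m+1) i) W ⊗ₜ[k] (c*d) =
                    mulP k A (m+1+1) (m+1+1) ((((mulP k A (m+1) i) W) ⊗ₜ[k] c) ⊗ₜ[k] d)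
                  rw [mulP_last_apply k A (m+1)]
                · -- i = m+2
                  have hi : i = m + 2 := by omega
                  subst hi
                  induction W using TensorProduct.induction_on with
                  | zero => simp
                  | add u v hu hv => simp only [TensorProduct.add_tmul, map_add, hu, hv]
                  | tmul U e =>
                      show mulP k A (m+1+1) (m+1+1) ((U ⊗ₜ[k] e) ⊗ₜ[k] (c*d)) =
                        mulP k A (m+1+1) (m+1+1)
                          ((mulP k A (m+2+1) (m+1+1)) (((U ⊗ₜ[k] e) ⊗ₜ[k] c) ⊗ₜ[k] d))
                      rw [mulP_last_apply k A (m+1) U e (c*d),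
                        mulP_lt_apply k A (m+2) (m+1+1) (by omega) ((U ⊗ₜ[k] e) ⊗ₜ[k] c) d,
                        mulP_last_apply k A (m+1) U e c,
                        mulP_last_apply k A (m+1) U (e*c) d, mul_assoc]

end Aux4
section Aux5
variable (k : Type) [Field k] (A : Type) [Ring A] [Bialgebra k A]
variable {N : Type} [AddCommGroup N] [Module k N]

/-- `ldiag` is a left action. -/
lemma ldiag_mul_act (ωN : A ⊗[k] N →ₗ[k] N) (hN : IsModule k A ωN) :
    ∀ (p : ℕ) (a b : A) (y : (Cd k A N p : Type)),
      ldiag k A ωN p (a ⊗ₜ ldiag k A ωN p (b ⊗ₜ y)) = ldiag k A ωN p ((a*b) ⊗ₜ y) := by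
  intro p
  induction p with
  | zero => exact fun a b y => hN.2 a b y
  | succ p ih =>
      have key : ∀ (u v : A ⊗[k] A) (w : (Cd k A N p : Type) ⊗[k] A),
          ldStep k A ωN p (u ⊗ₜ ldStep k A ωN p (v ⊗ₜ w)) = ldStep k A ωN p ((u*v) ⊗ₜ w) := by
        intro u v w
        induction u using TensorProduct.induction_on with
        | zero => simp [zero_mul]
        | add u1 u2 h1 h2 => simp only [TensorProduct.add_tmul, map_add, h1, h2, add_mul]
        | tmul u1 u2 =>
            induction v using TensorProduct.induction_on with
            | zero => simp [mul_zero]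
            | add v1 v2 h1 h2 => simp only [TensorProduct.add_tmul, TensorProduct.tmul_add,
                map_add, h1, h2, mul_add]
            | tmul v1 v2 =>
                induction w using TensorProduct.induction_on with
                | zero => simp
                | add w1 w2 h1 h2 => simp only [TensorProduct.tmul_add, map_add, h1, h2]
                | tmul z c =>
                    rw [ldStep_tmul, ldStep_tmul, Algebra.TensorProduct.tmul_mul_tmul,
                      ldStep_tmul, ih, mul_assoc]
      intro a b y
      rw [ldiag_succ_apply, ldiag_succ_apply, ldiag_succ_apply, key, ← comul_mul']

/-- `rdiagE` is a right action. -/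
lemma rdiagE_mul_act : ∀ (p : ℕ) (y : (Cd k A N p : Type)) (a b : A),
    rdiagE k A p (rdiagE k A p (y ⊗ₜ a) ⊗ₜ b) = rdiagE k A p (y ⊗ₜ (a*b)) := by
  intro p
  induction p with
  | zero =>
      intro y a b
      rw [rdiagE_zero_apply, rdiagE_zero_apply, rdiagE_zero_apply, smul_smul,
        counit_mul', mul_comm]
  | succ p ih =>
      have key : ∀ (w : (Cd k A N p : Type) ⊗[k] A) (u v : A ⊗[k] A),
          rdStep k A p (rdStep k A p (w ⊗ₜ u) ⊗ₜ v) = rdStep k A p (w ⊗ₜ (u*v)) := by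
        intro w u v
        induction u using TensorProduct.induction_on with
        | zero => simp [zero_mul]
        | add u1 u2 h1 h2 => simp only [TensorProduct.add_tmul, TensorProduct.tmul_add,
            map_add, h1, h2, add_mul]
        | tmul u1 u2 =>
            induction v using TensorProduct.induction_on with
            | zero => simp [mul_zero]
            | add v1 v2 h1 h2 => simp only [TensorProduct.tmul_add, map_add, h1, h2, mul_add]
            | tmul v1 v2 =>
                induction w using TensorProduct.induction_on with
                | zero => simp
                | add w1 w2 h1 h2 => simp only [TensorProduct.add_tmul, map_add, h1, h2]
                | tmul z e =>
                    rw [rdStep_tmul, rdStep_tmul, Algebra.TensorProduct.tmul_mul_tmul,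
                      rdStep_tmul, ih, mul_assoc]
      intro y a b
      induction y using TensorProduct.induction_on with
      | zero => simp
      | add y1 y2 h1 h2 => simp only [TensorProduct.add_tmul, map_add, h1, h2]
      | tmul z c =>
          rw [rdiagE_succ_apply, rdiagE_succ_apply, rdiagE_succ_apply, key, ← comul_mul']

/-- `ldiag` and `rdiagE` commute. -/
lemma rdiagE_ldiag_comm (ωN : A ⊗[k] N →ₗ[k] N) :
    ∀ (p : ℕ) (a b : A) (y : (Cd k A N p : Type)),
      rdiagE k A p (ldiag k A ωN p (a ⊗ₜ y) ⊗ₜ b) =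
        ldiag k A ωN p (a ⊗ₜ rdiagE k A p (y ⊗ₜ b)) := by
  intro p
  induction p with
  | zero =>
      intro a b y
      show rdiagE k A 0 (ωN (a ⊗ₜ y) ⊗ₜ b) = ωN (a ⊗ₜ rdiagE k A 0 (y ⊗ₜ b))
      rw [rdiagE_zero_apply, rdiagE_zero_apply, TensorProduct.tmul_smul, map_smul]
  | succ p ih =>
      have key : ∀ (u v : A ⊗[k] A) (w : (Cd k A N p : Type) ⊗[k] A),
          rdStep k A p (ldStep k A ωN p (u ⊗ₜ w) ⊗ₜ v) =
            ldStep k A ωN p (u ⊗ₜ rdStep k A p (w ⊗ₜ v)) := by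
        intro u v w
        induction u using TensorProduct.induction_on with
        | zero => simp
        | add u1 u2 h1 h2 => simp only [TensorProduct.add_tmul, map_add, h1, h2,
            TensorProduct.tmul_add]
        | tmul u1 u2 =>
            induction v using TensorProduct.induction_on with
            | zero => simp
            | add v1 v2 h1 h2 => simp only [TensorProduct.tmul_add, map_add, h1, h2]
            | tmul v1 v2 =>
                induction w using TensorProduct.induction_on with
                | zero => simp
                | add w1 w2 h1 h2 => simp only [TensorProduct.tmul_add,
                    TensorProduct.add_tmul, map_add, h1, h2]
                | tmul z c =>
                    rw [ldStep_tmul, rdStep_tmul, ih, rdStep_tmul, ldStep_tmul, mul_assoc]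
      intro a b y
      rw [ldiag_succ_apply, rdiagE_succ_apply, key, rdiagE_succ_apply, ldiag_succ_apply]
end Aux5
section Aux6
variable (k : Type) [Field k] (A : Type) [Ring A] [Bialgebra k A]
variable {M N : Type} [AddCommGroup M] [Module k M] [AddCommGroup N] [Module k N]

lemma caseA (ωN : A ⊗[k] N →ₗ[k] N) (hN : IsModule k A ωN) (n p : ℕ) (f : Yc k A M N n p) :
    faceMid k A (n+1) p 1 (face0 k A ωN n p f) =
      face0 k A ωN (n+1) p (face0 k A ωN n p f) := by
  apply TensorProduct.ext'
  intro z m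
  obtain ⟨w, rfl⟩ := (insP k A (n+1)).surjective z
  induction w using TensorProduct.induction_on with
  | zero => simp
  | add u v hu hv => simp only [map_add, TensorProduct.add_tmul, hu, hv]
  | tmul a X =>
      obtain ⟨w', rfl⟩ := (insP k A n).surjective X
      induction w' using TensorProduct.induction_on with
      | zero => simp
      | add u v hu hv => simp only [map_add, TensorProduct.tmul_add,
          TensorProduct.add_tmul, hu, hv]
      | tmul b x =>
          rw [faceMid_apply, mulP_one_insP, face0_apply, face0_apply, face0_apply,
            ldiag_mul_act k A ωN hN]

lemma caseB (ωN : A ⊗[k] N →ₗ[k] N) (n p j : ℕ) (h2 : 2 ≤ j) (hj : j ≤ n+1)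
    (f : Yc k A M N n p) :
    faceMid k A (n+1) p j (face0 k A ωN n p f) =
      face0 k A ωN (n+1) p (faceMid k A n p (j-1) f) := by
  obtain ⟨i, rfl⟩ : ∃ i, j = i + 1 := ⟨j-1, by omega⟩
  apply TensorProduct.ext'
  intro z m
  obtain ⟨w, rfl⟩ := (insP k A (n+1)).surjective z
  induction w using TensorProduct.induction_on with
  | zero => simp
  | add u v hu hv => simp only [map_add, TensorProduct.add_tmul, hu, hv]
  | tmul a X =>
      rw [Nat.add_sub_cancel, faceMid_apply, mulP_insP_succ k A n i (by omega) (by omega),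
        face0_apply, face0_apply, faceMid_apply]

lemma caseC (ωM : A ⊗[k] M →ₗ[k] M) (ωN : A ⊗[k] N →ₗ[k] N) (n p : ℕ) (f : Yc k A M N n p) :
    faceLastYD k A ωM (n+1) p (face0 k A ωN n p f) =
      face0 k A ωN (n+1) p (faceLastYD k A ωM n p f) := by
  apply TensorProduct.ext'
  intro z m
  induction z using TensorProduct.induction_on with
  | zero => simp
  | add u v hu hv => simp only [map_add, TensorProduct.add_tmul, hu, hv]
  | tmul Y c =>
      obtain ⟨w, rfl⟩ := (insP k A n).surjective Y
      induction w using TensorProduct.induction_on with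
      | zero => simp
      | add u v hu hv => simp only [map_add, TensorProduct.tmul_add,
          TensorProduct.add_tmul, hu, hv]
      | tmul a x =>
          rw [faceLastYD_apply k A ωM (n+1) p _ (insP k A n (a ⊗ₜ x)) c m,
            ← insP_succ_apply, face0_apply, faceLastYD_apply]
          generalize ΔA k A c = u
          induction u using TensorProduct.induction_on with
          | zero => simp
          | add u v hu hv => simp only [map_add, TensorProduct.tmul_add, hu, hv]
          | tmul c1 c2 =>
              rw [lastAux_tmul, lastAux_tmul, face0_apply, rdiagE_ldiag_comm k A ωN p]

lemma caseD (n p i j : ℕ) (h1 : 1 ≤ i) (h2 : i < j) (h3 : j ≤ n+1) (f : Yc k A M N n p) :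
    faceMid k A (n+1) p j (faceMid k A n p i f) =
      faceMid k A (n+1) p i (faceMid k A n p (j-1) f) := by
  obtain ⟨m', rfl⟩ : ∃ m', n = m' + 1 := ⟨n-1, by omega⟩
  apply TensorProduct.ext'
  intro z mm
  rw [faceMid_apply, faceMid_apply, faceMid_apply, faceMid_apply]
  rw [show mulP k A (m'+1) i (mulP k A (m'+1+1) j z) =
      mulP k A (m'+1) (j-1) (mulP k A (m'+1+1) i z) from
    mulP_mulP k A m' i j h1 h2 (by omega) z]

lemma caseE1 (ωM : A ⊗[k] M →ₗ[k] M) (n p i : ℕ) (h1 : 1 ≤ i) (h2 : i ≤ n)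
    (f : Yc k A M N n p) :
    faceLastYD k A ωM (n+1) p (faceMid k A n p i f) =
      faceMid k A (n+1) p i (faceLastYD k A ωM n p f) := by
  apply TensorProduct.ext'
  intro z m
  induction z using TensorProduct.induction_on with
  | zero => simp
  | add u v hu hv => simp only [map_add, TensorProduct.add_tmul, hu, hv]
  | tmul Y c =>
      rw [faceLastYD_apply, faceMid_apply, mulP_lt_apply k A n i (by omega), faceLastYD_apply]
      generalize ΔA k A c = u
      induction u using TensorProduct.induction_on with
      | zero => simp
      | add u v hu hv => simp only [map_add, hu, hv]
      | tmul c1 c2 => rw [lastAux_tmul, lastAux_tmul, faceMid_apply]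

lemma caseE2 (ωM : A ⊗[k] M →ₗ[k] M) (hM : IsModule k A ωM) (n p : ℕ) (f : Yc k A M N n p) :
    faceLastYD k A ωM (n+1) p (faceLastYD k A ωM n p f) =
      faceMid k A (n+1) p (n+1) (faceLastYD k A ωM n p f) := by
  apply TensorProduct.ext'
  intro z m
  induction z using TensorProduct.induction_on with
  | zero => simp
  | add u v hu hv => simp only [map_add, TensorProduct.add_tmul, hu, hv]
  | tmul Y d =>
      induction Y using TensorProduct.induction_on with
      | zero => simp
      | add u v hu hv => simp only [TensorProduct.add_tmul, map_add, hu, hv]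
      | tmul x c =>
          rw [faceLastYD_apply, faceMid_apply, mulP_last_apply k A n, faceLastYD_apply,
            comul_mul']
          have key : ∀ (u : A ⊗[k] A) (d1 d2 : A),
              rdiagE k A p ((lastAux k A ωM n p f x (ωM (d2 ⊗ₜ m)) u) ⊗ₜ d1) =
                lastAux k A ωM n p f x m (u * (d1 ⊗ₜ d2)) := by
            intro u d1 d2
            induction u using TensorProduct.induction_on with
            | zero => simp [zero_mul]
            | add u v hu hv => simp only [map_add, TensorProduct.add_tmul, add_mul, hu, hv]
            | tmul c1 c2 =>
                rw [lastAux_tmul, hM.2, rdiagE_mul_act k A p,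
                  Algebra.TensorProduct.tmul_mul_tmul, lastAux_tmul]
          generalize ΔA k A d = v
          induction v using TensorProduct.induction_on with
          | zero => simp [mul_zero]
          | add u v hu hv => simp only [map_add, mul_add, hu, hv]
          | tmul d1 d2 =>
              rw [lastAux_tmul, faceLastYD_apply, key (ΔA k A c) d1 d2]

lemma bYD_zero' (ωM : A ⊗[k] M →ₗ[k] M) (ωN : A ⊗[k] N →ₗ[k] N) (n p : ℕ)
    (f : Yc k A M N n p) : bYD k A ωM ωN n p 0 f = face0 k A ωN n p f := by
  rw [bYD, if_pos rfl]

lemma bYD_mid' (ωM : A ⊗[k] M →ₗ[k] M) (ωN : A ⊗[k] N →ₗ[k] N) (n p i : ℕ)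
    (h1 : i ≠ 0) (h2 : i ≤ n) (f : Yc k A M N n p) :
    bYD k A ωM ωN n p i f = faceMid k A n p i f := by
  rw [bYD, if_neg h1, if_pos h2]

lemma bYD_last' (ωM : A ⊗[k] M →ₗ[k] M) (ωN : A ⊗[k] N →ₗ[k] N) (n p i : ℕ)
    (h1 : i ≠ 0) (h2 : ¬ i ≤ n) (f : Yc k A M N n p) :
    bYD k A ωM ωN n p i f = faceLastYD k A ωM n p f := by
  rw [bYD, if_neg h1, if_neg h2]

end Aux6

/-- The simplicial relations for the horizontal face maps of the
Yetter-Drinfel'd bicomplex: `b_j^{n+1,p} ∘ b_i^{n,p} = b_i^{n+1,p} ∘ b_{j-1}^{n,p}`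
for all `0 ≤ i < j ≤ n+2`. -/

theorem bYD_comp_rel (k : Type) [Field k] (A : Type) [Ring A] [Bialgebra k A]
    (M N : Type) [AddCommGroup M] [Module k M] [AddCommGroup N] [Module k N]
    (ωM : A ⊗[k] M →ₗ[k] M) (ρM : M →ₗ[k] M ⊗[k] A)
    (ωN : A ⊗[k] N →ₗ[k] N) (ρN : N →ₗ[k] N ⊗[k] A)
    (hM : IsYetterDrinfeld k A ωM ρM) (hN : IsYetterDrinfeld k A ωN ρN)
    (n p i j : ℕ) (hij : i < j) (hj : j ≤ n + 2) (f : Yc k A M N n p) :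
    bYD k A ωM ωN (n+1) p j (bYD k A ωM ωN n p i f) =
      bYD k A ωM ωN (n+1) p i (bYD k A ωM ωN n p (j-1) f) := by
  obtain ⟨hMmod, -, -⟩ := hM
  obtain ⟨hNmod, -, -⟩ := hN
  rcases eq_or_ne i 0 with rfl | hi0
  · rcases eq_or_ne j (n+2) with rfl | hjtop
    · rw [bYD_zero' k A ωM ωN n p f,
        bYD_last' k A ωM ωN (n+1) p (n+2) (by omega) (by omega),
        show n+2-1 = n+1 from rfl,
        bYD_last' k A ωM ωN n p (n+1) (by omega) (by omega),
        bYD_zero' k A ωM ωN (n+1) p]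
      exact caseC k A ωM ωN n p f
    · rcases eq_or_ne j 1 with rfl | hj1
      · rw [bYD_zero' k A ωM ωN n p f,
          bYD_mid' k A ωM ωN (n+1) p 1 (by omega) (by omega),
          bYD_zero' k A ωM ωN (n+1) p]
        exact caseA k A ωN hNmod n p f
      · rw [bYD_zero' k A ωM ωN n p f,
          bYD_mid' k A ωM ωN (n+1) p j (by omega) (by omega),
          bYD_mid' k A ωM ωN n p (j-1) (by omega) (by omega),
          bYD_zero' k A ωM ωN (n+1) p]
        exact caseB k A ωN n p j (by omega) (by omega) f
  · rcases eq_or_ne j (n+2) with rfl | hjtop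
    · rcases eq_or_ne i (n+1) with rfl | hitop
      · rw [bYD_last' k A ωM ωN n p (n+1) (by omega) (by omega) f,
          bYD_last' k A ωM ωN (n+1) p (n+2) (by omega) (by omega),
          show n+2-1 = n+1 from rfl,
          bYD_last' k A ωM ωN n p (n+1) (by omega) (by omega) f,
          bYD_mid' k A ωM ωN (n+1) p (n+1) (by omega) (by omega)]
        exact caseE2 k A ωM hMmod n p f
      · rw [bYD_mid' k A ωM ωN n p i (by omega) (by omega) f,
          bYD_last' k A ωM ωN (n+1) p (n+2) (by omega) (by omega),
          show n+2-1 = n+1 from rfl,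
          bYD_last' k A ωM ωN n p (n+1) (by omega) (by omega) f,
          bYD_mid' k A ωM ωN (n+1) p i (by omega) (by omega)]
        exact caseE1 k A ωM n p i (by omega) (by omega) f
    · rw [bYD_mid' k A ωM ωN n p i (by omega) (by omega) f,
        bYD_mid' k A ωM ωN (n+1) p j (by omega) (by omega),
        bYD_mid' k A ωM ωN n p (j-1) (by omega) (by omega) f,
        bYD_mid' k A ωM ωN (n+1) p i (by omega) (by omega)]
      exact caseD k A n p i j (by omega) (by omega) (by omega) f

end PS
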